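/- Let β be a Pisot number. For every y ∈ ℤ[β] ∩ [0,1) there exists x ∈ ℤ[β] ∩ [0,1) with T(x) = y, where T is the β-transformation. -/

import Mathlib

noncomputable section

open IntermediateField

/-- A Pisot number: a real algebraic integer `β > 1` such that every ring embedding
`σ : ℚ(β) → ℂ` with `σ(β) ≠ β` satisfies `|σ(β)| < 1`. -/
def IsPisot (β : ℝ) : Prop :=
  1 < β ∧ IsIntegral ℤ β ∧
    ∀ σ : ℚ⟮β⟯ →+* ℂ, σ (AdjoinSimple.gen ℚ β) ≠ (β : ℂ) →
      ‖σ (AdjoinSimple.gen ℚ β)‖ < 1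

/-- The β-transformation `T(x) = βx − ⌊βx⌋`. -/
def betaT (β : ℝ) (x : ℝ) : ℝ := Int.fract (β * x)

set_option synthInstance.maxHeartbeats 1000000 in
lemma pisot_coeff_zero_abs_le (β : ℝ) (hβ : IsPisot β) :
    |(((minpoly ℤ β).coeff 0 : ℤ) : ℝ)| ≤ β := by
  obtain ⟨hβ1, hint, hconj⟩ := hβ
  have hβ0 : (0:ℝ) < β := one_pos.trans hβ1
  have hQ : IsIntegral ℚ β := hint.tower_top
  haveI : FiniteDimensional ℚ ℚ⟮β⟯ := IntermediateField.adjoin.finiteDimensional hQ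
  set x : ℚ⟮β⟯ := AdjoinSimple.gen ℚ β with hx
  set σ₀ : ℚ⟮β⟯ →ₐ[ℚ] ℂ :=
    (Complex.ofRealHom.comp (algebraMap ℚ⟮β⟯ ℝ)).toRatAlgHom with hσ₀
  have hσ₀x : σ₀ x = (β : ℂ) := by
    show Complex.ofRealHom (algebraMap ℚ⟮β⟯ ℝ x) = (β : ℂ)
    rw [AdjoinSimple.algebraMap_gen]
    rfl
  set pb := IntermediateField.adjoin.powerBasis hQ with hpb
  have pbgen : pb.gen = x := IntermediateField.adjoin.powerBasis_gen hQ
  have habs : ‖(algebraMap ℚ ℂ (Algebra.norm ℚ x))‖ ≤ β := by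
    classical
    rw [Algebra.norm_eq_prod_embeddings ℚ ℂ x, norm_prod,
      ← Finset.mul_prod_erase Finset.univ _ (Finset.mem_univ σ₀)]
    have h1 : ‖σ₀ x‖ = β := by
      rw [hσ₀x, Complex.norm_real, Real.norm_eq_abs, abs_of_pos hβ0]
    rw [h1]
    refine mul_le_of_le_one_right hβ0.le ?_
    refine Finset.prod_le_one (fun σ _ => norm_nonneg _) ?_
    intro σ hσ
    refine le_of_lt (hconj σ.toRingHom ?_)
    intro h
    refine (Finset.mem_erase.mp hσ).1 ?_
    refine pb.algHom_ext ?_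
    rw [pbgen]
    show σ x = σ₀ x
    rw [hσ₀x]
    exact h
  have hNval : Algebra.norm ℚ x = (-1)^pb.dim * (minpoly ℚ β).coeff 0 := by
    erw [← pbgen, Algebra.PowerBasis.norm_gen_eq_coeff_zero_minpoly pb, pbgen, hx,
      IntermediateField.minpoly_gen]
  have hmap : minpoly ℚ β = (minpoly ℤ β).map (algebraMap ℤ ℚ) :=
    minpoly.isIntegrallyClosed_eq_field_fractions ℚ ℝ hint
  have hc : (minpoly ℚ β).coeff 0 = ((minpoly ℤ β).coeff 0 : ℚ) := by
    rw [hmap, Polynomial.coeff_map]; simp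
  calc |(((minpoly ℤ β).coeff 0 : ℤ) : ℝ)|
      = ‖(algebraMap ℚ ℂ (Algebra.norm ℚ x))‖ := by
        rw [hNval, hc]
        rw [map_mul, map_pow]
        rw [norm_mul, norm_pow]
        simp [Complex.norm_intCast]
    _ ≤ β := habs

lemma aeval_divX_identity (r : Polynomial ℤ) (β : ℝ) :
    (Polynomial.aeval β) r = β * (Polynomial.aeval β) r.divX + (r.coeff 0 : ℝ) := by
  conv_lhs => rw [← r.X_mul_divX_add]
  simp

lemma aeval_mem_adjoin (β : ℝ) (r : Polynomial ℤ) :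
    (Polynomial.aeval β) r ∈ Algebra.adjoin ℤ ({β} : Set ℝ) := by
  rw [Algebra.adjoin_singleton_eq_range_aeval]
  exact ⟨r, rfl⟩

set_option maxHeartbeats 1000000 in
/-- For a Pisot number `β`, every `y ∈ ℤ[β] ∩ [0,1)` has a preimage under the
β-transformation lying in `ℤ[β] ∩ [0,1)`. -/
theorem exists_zbeta_preimage_of_betaT (β : ℝ) (hβ : IsPisot β) :
    ∀ y ∈ (Algebra.adjoin ℤ ({β} : Set ℝ) : Set ℝ) ∩ Set.Ico (0 : ℝ) 1,
      ∃ x ∈ (Algebra.adjoin ℤ ({β} : Set ℝ) : Set ℝ) ∩ Set.Ico (0 : ℝ) 1,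
        betaT β x = y := by
  rintro y ⟨hymem, hy0, hy1⟩
  have hβ0 : (0:ℝ) < β := one_pos.trans hβ.1
  have key := pisot_coeff_zero_abs_le β hβ
  obtain ⟨q, hq⟩ : ∃ q : Polynomial ℤ, (Polynomial.aeval β) q = y := by
    rw [SetLike.mem_coe, Algebra.adjoin_singleton_eq_range_aeval] at hymem
    exact hymem
  set p := minpoly ℤ β with hp
  have ha0 : p.coeff 0 ≠ 0 := by
    have hQ : IsIntegral ℚ β := hβ.2.1.tower_top
    have h1 := minpoly.coeff_zero_ne_zero hQ (ne_of_gt hβ0)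
    have hmap : minpoly ℚ β = (minpoly ℤ β).map (algebraMap ℤ ℚ) :=
      minpoly.isIntegrallyClosed_eq_field_fractions ℚ ℝ hβ.2.1
    rw [hmap, Polynomial.coeff_map] at h1
    simpa using h1
  set a0 : ℤ := p.coeff 0 with ha0def
  set n : ℤ := (a0.natAbs : ℤ) with hndef
  have hn0 : 0 < n := by
    simp only [hndef, Int.natCast_pos, Int.natAbs_pos]
    exact ha0
  have hnβ : (n : ℝ) ≤ β := by
    calc (n : ℝ) = |((a0 : ℤ) : ℝ)| := by
          rw [hndef]; push_cast [Nat.cast_natAbs]; ring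
      _ ≤ β := key
  set m : ℤ := q.coeff 0 with hmdef
  set k : ℤ := (-m) % n with hkdef
  have hk0 : 0 ≤ k := Int.emod_nonneg _ (ne_of_gt hn0)
  have hkn : k < n := Int.emod_lt_of_pos _ hn0
  have hdvd : n ∣ m + k := ⟨-((-m)/n), by rw [hkdef, Int.emod_def]; ring⟩
  obtain ⟨t, ht⟩ : a0 ∣ m + k := Int.natAbs_dvd.mp hdvd
  set x : ℝ := (Polynomial.aeval β) (q.divX - Polynomial.C t * p.divX) with hxdef
  have hbx : β * x = y + (k : ℝ) := by
    have hq' := aeval_divX_identity q β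
    have hp' := aeval_divX_identity p β
    rw [minpoly.aeval] at hp'
    set A := (Polynomial.aeval β) q.divX
    set B := (Polynomial.aeval β) p.divX
    have e1 : β * A = y - (m : ℝ) := by rw [hq] at hq'; linarith
    have e2 : β * B = -((a0 : ℤ) : ℝ) := by linarith
    have e3 : (m : ℝ) + (k : ℝ) = ((a0 : ℤ) : ℝ) * (t : ℝ) := by exact_mod_cast ht
    have hx' : x = A - (t : ℝ) * B := by
      rw [hxdef]; simp [A, B]
    rw [hx']
    have expand : β * (A - (t : ℝ) * B) = β * A - (t : ℝ) * (β * B) := by ring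
    rw [expand, e1, e2]
    linear_combination -e3
  have hxnonneg : (0:ℝ) ≤ x := by
    have h1 : (0:ℝ) ≤ β * x := by
      rw [hbx]
      have : (0:ℝ) ≤ (k : ℝ) := by exact_mod_cast hk0
      linarith
    nlinarith
  have hxlt : x < 1 := by
    have h1 : β * x < β * 1 := by
      rw [hbx, mul_one]
      have hk' : (k : ℝ) ≤ (n : ℝ) - 1 := by
        have : k ≤ n - 1 := by omega
        exact_mod_cast this
      linarith
    exact lt_of_mul_lt_mul_left h1 hβ0.le
  refine ⟨x, ⟨aeval_mem_adjoin β _, hxnonneg, hxlt⟩, ?_⟩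
  rw [betaT, hbx, Int.fract_add_intCast, Int.fract_eq_self.mpr ⟨hy0, hy1⟩]
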